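/- arXiv:2504.16820 — 4 statements merged into one kernel-verified Lean document; each statement's English description precedes it below -/
import Mathlib

section
/- There is no symmetric y⃗-linear IPS certificate for the 4-variable F₂ system: with variables X = {x₁, x₁*, x₂, x₂*} and the group Γ ≤ Sym(X) generated by π = (x₁ x₂)(x₁* x₂*) and π* = (x₁ x₁*)(x₂ x₂*), and the six axioms f₁ = x₁+x₂+1, f₂ = x₁*+x₂*+1, f₃ = x₁*+x₂+1, f₄ = x₁+x₂*+1, f₅ = x₁+x₁*+1, f₆ = x₂+x₂*+1 over F₂, there exists no Γ-invariant polynomial C(x⃗,y⃗) ∈ F₂[X ∪ {y₁,…,y₆}] that is y⃗-linear (i.e., C = Σᵢ yᵢ gᵢ(x⃗)) and satisfies C(x⃗,f⃗) = 1. -/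
open MvPolynomial

/-- There is no `Γ`-invariant `y`-linear IPS certificate over `F₂`
for the six axioms `f₁,…,f₆` on variables `x₁ = 0, x₁* = 1, x₂ = 2, x₂* = 3`,
where `Γ` is generated by `π = (x₁ x₂)(x₁* x₂*)` and `π* = (x₁ x₁*)(x₂ x₂*)`
(acting on the `y`-variables by permuting the axioms accordingly). -/
theorem stmt4 :
    ¬ ∃ g : Fin 6 → MvPolynomial (Fin 4) (ZMod 2),
      let f : Fin 6 → MvPolynomial (Fin 4) (ZMod 2) :=
        ![X 0 + X 2 + 1, X 1 + X 3 + 1, X 1 + X 2 + 1,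
          X 0 + X 3 + 1, X 0 + X 1 + 1, X 2 + X 3 + 1]
      let πX : Equiv.Perm (Fin 4) := Equiv.swap 0 2 * Equiv.swap 1 3
      let πY : Equiv.Perm (Fin 6) := Equiv.swap 2 3 * Equiv.swap 4 5
      let πsX : Equiv.Perm (Fin 4) := Equiv.swap 0 1 * Equiv.swap 2 3
      let πsY : Equiv.Perm (Fin 6) := Equiv.swap 0 1 * Equiv.swap 2 3
      let Cg : MvPolynomial (Fin 4 ⊕ Fin 6) (ZMod 2) :=
        ∑ i : Fin 6, X (Sum.inr i) * rename Sum.inl (g i)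
      rename (Sum.map (fun x => πX x) (fun y => πY y)) Cg = Cg ∧
      rename (Sum.map (fun x => πsX x) (fun y => πsY y)) Cg = Cg ∧
      aeval (Sum.elim X f) Cg = 1 := by
  rintro ⟨g, h1, h2, h3⟩
  set c : Fin 6 → ZMod 2 := fun i => aeval (fun _ : Fin 4 => (0 : ZMod 2)) (g i) with hc
  have key : ∀ v : Fin 6 → ZMod 2,
      aeval (Sum.elim (fun _ : Fin 4 => (0 : ZMod 2)) v)
        (∑ i : Fin 6, (X (Sum.inr i) : MvPolynomial (Fin 4 ⊕ Fin 6) (ZMod 2)) *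
          rename Sum.inl (g i)) = ∑ i : Fin 6, v i * c i := by
    intro v
    rw [map_sum]
    refine Finset.sum_congr rfl fun i _ => ?_
    rw [map_mul, aeval_X, aeval_rename, Sum.elim_comp_inl, Sum.elim_inr, hc]
  -- from h2 (πsY = (0 1)(2 3)) and h1 (πY = (2 3)(4 5))
  have inv : ∀ (π : Equiv.Perm (Fin 4)) (σ : Equiv.Perm (Fin 6)),
      rename (Sum.map (fun x => π x) (fun y => σ y))
        (∑ i : Fin 6, (X (Sum.inr i) : MvPolynomial (Fin 4 ⊕ Fin 6) (ZMod 2)) *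
          rename Sum.inl (g i)) =
        (∑ i : Fin 6, (X (Sum.inr i) : MvPolynomial (Fin 4 ⊕ Fin 6) (ZMod 2)) *
          rename Sum.inl (g i)) →
      ∀ v : Fin 6 → ZMod 2, ∑ i : Fin 6, v (σ i) * c i = ∑ i : Fin 6, v i * c i := by
    intro π σ h v
    have := congrArg (aeval (Sum.elim (fun _ : Fin 4 => (0 : ZMod 2)) v)) h
    rw [aeval_rename, Sum.elim_comp_map] at this
    exact ((key (v ∘ σ)).symm.trans this).trans (key v)
  have e1 := inv _ _ h1
  have e2 := inv _ _ h2
  -- certificate equation at x = 0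
  have h3' := congrArg (aeval (fun _ : Fin 4 => (0 : ZMod 2))) h3
  rw [map_sum, map_one] at h3'
  simp only [map_mul, aeval_X, aeval_rename, Sum.elim_comp_inl, Sum.elim_inr, ← hc] at h3'
  have p0 : (Equiv.swap 0 1 * Equiv.swap 2 3 : Equiv.Perm (Fin 6)) 0 = 1 := by decide
  have p1 : (Equiv.swap 0 1 * Equiv.swap 2 3 : Equiv.Perm (Fin 6)) 1 = 0 := by decide
  have p2 : (Equiv.swap 0 1 * Equiv.swap 2 3 : Equiv.Perm (Fin 6)) 2 = 3 := by decide
  have p3 : (Equiv.swap 0 1 * Equiv.swap 2 3 : Equiv.Perm (Fin 6)) 3 = 2 := by decide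
  have p4 : (Equiv.swap 0 1 * Equiv.swap 2 3 : Equiv.Perm (Fin 6)) 4 = 4 := by decide
  have p5 : (Equiv.swap 0 1 * Equiv.swap 2 3 : Equiv.Perm (Fin 6)) 5 = 5 := by decide
  have r4 : (Equiv.swap 2 3 * Equiv.swap 4 5 : Equiv.Perm (Fin 6)) 4 = 5 := by decide
  have r5 : (Equiv.swap 2 3 * Equiv.swap 4 5 : Equiv.Perm (Fin 6)) 5 = 4 := by decide
  have r0 : (Equiv.swap 2 3 * Equiv.swap 4 5 : Equiv.Perm (Fin 6)) 0 = 0 := by decide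
  have r1 : (Equiv.swap 2 3 * Equiv.swap 4 5 : Equiv.Perm (Fin 6)) 1 = 1 := by decide
  have r2 : (Equiv.swap 2 3 * Equiv.swap 4 5 : Equiv.Perm (Fin 6)) 2 = 3 := by decide
  have r3 : (Equiv.swap 2 3 * Equiv.swap 4 5 : Equiv.Perm (Fin 6)) 3 = 2 := by decide
  have q1 := e2 (fun i => if i = 0 then 1 else 0)
  have q2 := e2 (fun i => if i = 2 then 1 else 0)
  have q3 := e1 (fun i => if i = 4 then 1 else 0)
  simp only [Fin.sum_univ_six, p0, p1, p2, p3, p4, p5, r0, r1, r2, r3, r4, r5] at q1 q2 q3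
  simp at q1 q2 q3
  simp only [Fin.sum_univ_six, map_add, map_one, aeval_X] at h3'
  simp [Matrix.cons_val_succ] at h3'
  have m5 : (![X 0 + X 2 + 1, X 1 + X 3 + 1, X 1 + X 2 + 1, X 0 + X 3 + 1,
      X 0 + X 1 + 1, X 2 + X 3 + 1] (5 : Fin 6) : MvPolynomial (Fin 4) (ZMod 2))
      = X 2 + X 3 + 1 := rfl
  have hcc : ∀ i, c i = constantCoeff (g i) := by intro i; simp [hc]
  rw [← hcc 0, ← hcc 1, ← hcc 2, ← hcc 3, ← hcc 4, ← hcc 5, q1, q2, q3] at h3'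
  have h0 : ∀ a b d : ZMod 2, a + a + b + b + d + d ≠ 1 := by decide
  exact h0 _ _ _ h3'
end

section
/- For n ∈ ℕ, a field F with char(F) > n or char(F) = 0, and β ∈ F with β ∉ {0,1,…,n}, define f(x⃗) := −Σ_{k=0}^{n} (k! / ∏_{j=0}^{k}(β−j)) · S_{n,k}(x⃗), where S_{n,k} is the k-th elementary symmetric polynomial in x₁,…,x_n. Then f(a⃗) · (Σᵢ aᵢ − β) = 1 for every Boolean assignment a⃗ ∈ {0,1}ⁿ. -/
open Finset

lemma stmt6_key (F : Type*) [Field F] :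
    ∀ (s : ℕ) (β : F), (∀ j : ℕ, j ≤ s → β ≠ (j : F)) →
      ∑ k ∈ Finset.range (s + 1),
        ((s.descFactorial k : F) / ∏ j ∈ Finset.range (k + 1), (β - (j : F)))
        = 1 / (β - (s : F)) := by
  intro s
  induction s with
  | zero => intro β hβ; simp
  | succ s ih =>
    intro β hβ
    have hβ0 : β ≠ 0 := by simpa using hβ 0 (Nat.zero_le _)
    have hβ' : ∀ j : ℕ, j ≤ s → β - 1 ≠ (j : F) := by
      intro j hj h
      apply hβ (j + 1) (by omega)
      push_cast
      linear_combination h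
    have hstep : ∀ k : ℕ,
        (∏ j ∈ Finset.range (k + 2), (β - (j : F)))
          = β * ∏ j ∈ Finset.range (k + 1), ((β - 1) - (j : F)) := by
      intro k
      rw [Finset.prod_range_succ']
      simp only [Nat.cast_zero, sub_zero]
      rw [mul_comm]
      congr 1
      apply Finset.prod_congr rfl
      intro j _
      push_cast
      ring
    rw [Finset.sum_range_succ' _ (s + 1)]
    have hre : ∀ k ∈ Finset.range (s + 1),
        ((s + 1).descFactorial (k + 1) : F) / ∏ j ∈ Finset.range (k + 2), (β - (j : F))
          = ((s + 1 : ℕ) : F) / β *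
            ((s.descFactorial k : F) / ∏ j ∈ Finset.range (k + 1), ((β - 1) - (j : F))) := by
      intro k hk
      simp only [Finset.mem_range] at hk
      rw [Nat.succ_descFactorial_succ, hstep k]
      have hP : (∏ j ∈ Finset.range (k + 1), ((β - 1) - (j : F))) ≠ 0 := by
        apply Finset.prod_ne_zero_iff.mpr
        intro j hj
        simp only [Finset.mem_range] at hj
        exact sub_ne_zero_of_ne (hβ' j (by omega))
      push_cast
      field_simp
      try ring
    rw [Finset.sum_congr rfl hre, ← Finset.mul_sum, ih (β - 1) hβ']
    have hβs : β - ((s : F) + 1) ≠ 0 := by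
      have h := hβ (s + 1) le_rfl
      push_cast at h
      intro hc
      exact h (by linear_combination hc)
    have h1 : β - 1 - (s : F) = β - ((s:F) + 1) := by ring
    rw [h1]
    simp only [Nat.descFactorial_zero, zero_add, Finset.prod_range_one, Nat.cast_zero, sub_zero]
    push_cast
    field_simp
    ring

/-- For a field with `char F = 0` or `char F > n` and
`β ∉ {0,…,n}`, the polynomial
`f(x) = −Σ_{k≤n} (k!/∏_{j≤k}(β−j))·S_{n,k}(x)` satisfies
`f(a)·(Σᵢ aᵢ − β) = 1` on every Boolean point `a ∈ {0,1}ⁿ`. -/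
theorem stmt6 (n : ℕ) (F : Type*) [Field F]
    (hchar : ringChar F = 0 ∨ n < ringChar F)
    (β : F) (hβ : ∀ j : ℕ, j ≤ n → β ≠ (j : F))
    (a : Fin n → F) (ha : ∀ i, a i = 0 ∨ a i = 1) :
    (-(∑ k ∈ Finset.range (n + 1),
        ((k.factorial : F) / ∏ j ∈ Finset.range (k + 1), (β - (j : F))) *
          (∑ S ∈ Finset.univ.powersetCard k, ∏ i ∈ S, a i))) *
      ((∑ i, a i) - β) = 1 := by
  classical
  set A : Finset (Fin n) := Finset.univ.filter (fun i => a i = 1) with hA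
  set s : ℕ := A.card with hs
  have hsn : s ≤ n := by
    simpa using Finset.card_le_card (Finset.filter_subset _ (Finset.univ : Finset (Fin n)))
  -- sum of a i equals s
  have hsum : (∑ i, a i) = (s : F) := by
    rw [← Finset.sum_filter_add_sum_filter_not Finset.univ (fun i => a i = 1)]
    have h1 : ∑ i ∈ Finset.univ.filter (fun i => a i = 1), a i = (s : F) := by
      rw [Finset.sum_congr rfl (fun i hi => (Finset.mem_filter.mp hi).2)]
      simp [hs, hA]
    have h2 : ∑ i ∈ Finset.univ.filter (fun i => ¬ a i = 1), a i = 0 := by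
      apply Finset.sum_eq_zero
      intro i hi
      rcases ha i with h | h
      · exact h
      · exact absurd h (Finset.mem_filter.mp hi).2
    rw [h1, h2, add_zero]
  -- elementary symmetric value
  have hesym : ∀ k : ℕ,
      (∑ S ∈ Finset.univ.powersetCard k, ∏ i ∈ S, a i) = ((s.choose k : ℕ) : F) := by
    intro k
    have hterm : ∀ S ∈ (Finset.univ : Finset (Fin n)).powersetCard k,
        (∏ i ∈ S, a i) = if S ⊆ A then (1 : F) else 0 := by
      intro S _
      by_cases h : S ⊆ A
      · rw [if_pos h]
        apply Finset.prod_eq_one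
        intro i hi
        have := h hi
        exact (Finset.mem_filter.mp this).2
      · rw [if_neg h]
        obtain ⟨i, hiS, hiA⟩ := Finset.not_subset.mp h
        apply Finset.prod_eq_zero hiS
        rcases ha i with h0 | h1
        · exact h0
        · exact absurd (Finset.mem_filter.mpr ⟨Finset.mem_univ i, h1⟩) hiA
    have hfil : ((Finset.univ : Finset (Fin n)).powersetCard k).filter (fun S => S ⊆ A)
        = A.powersetCard k := by
      ext S
      simp only [Finset.mem_powersetCard, Finset.mem_filter]
      constructor
      · rintro ⟨⟨-, hc⟩, hSA⟩; exact ⟨hSA, hc⟩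
      · rintro ⟨hSA, hc⟩; exact ⟨⟨Finset.subset_univ S, hc⟩, hSA⟩
    rw [Finset.sum_congr rfl hterm, Finset.sum_boole, hfil, Finset.card_powersetCard]
  -- rewrite each term
  have hterm2 : ∀ k ∈ Finset.range (n + 1),
      ((k.factorial : F) / ∏ j ∈ Finset.range (k + 1), (β - (j : F))) *
          (∑ S ∈ Finset.univ.powersetCard k, ∏ i ∈ S, a i)
        = (s.descFactorial k : F) / ∏ j ∈ Finset.range (k + 1), (β - (j : F)) := by
    intro k _
    rw [hesym k, Nat.descFactorial_eq_factorial_mul_choose]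
    push_cast
    ring
  rw [Finset.sum_congr rfl hterm2, hsum]
  -- drop tail terms k > s
  have htail : ∑ k ∈ Finset.range (n + 1),
      ((s.descFactorial k : F) / ∏ j ∈ Finset.range (k + 1), (β - (j : F)))
      = ∑ k ∈ Finset.range (s + 1),
      ((s.descFactorial k : F) / ∏ j ∈ Finset.range (k + 1), (β - (j : F))) := by
    symm
    apply Finset.sum_subset
    · intro k hk
      simp only [Finset.mem_range] at *
      omega
    · intro k _ hk
      simp only [Finset.mem_range, not_lt] at hk
      rw [Nat.descFactorial_eq_zero_iff_lt.mpr (by omega)]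
      simp
  rw [htail, stmt6_key F s β (fun j hj => hβ j (le_trans hj hsn))]
  have hβs : β - (s : F) ≠ 0 := sub_ne_zero_of_ne (hβ s hsn)
  field_simp
  ring
end

section
/- Recursive identity for injection-sum polynomials: for D ⊆ [n+1] with |D| ≥ 1, define B_D(x⃗) := Σ_{γ: D → [n] injective} ∏_{i∈D} x_{i,γ(i)} and X_{D→j} := ∏_{i∈D} x_{ij}, with B_∅ = 1. Then over ℚ, B_D = Σ_{k=1}^{|D|} (−1)^{k−1} · (k!/|D|) · Σ_{D_k ⊆ D, |D_k|=k} (Σ_{j∈[n]} X_{D_k→j}) · B_{D∖D_k}. -/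
open MvPolynomial

open Finset

lemma count_lemma (n : ℕ) (g : Fin (n+1) → Fin n) (D : Finset (Fin (n+1))) (hD : D.Nonempty) :
    ∑ k ∈ Finset.Icc 1 D.card,
      ((-1:ℚ)^(k-1) * (k.factorial : ℚ) / (D.card : ℚ)) *
      (((D.powersetCard k).filter
        (fun F => (∃ j, ∀ i ∈ F, g i = j) ∧ Set.InjOn g ↑(D \ F))).card : ℚ)
    = if Set.InjOn g ↑D then 1 else 0 := by
  have hd : 1 ≤ D.card := hD.card_pos
  by_cases hinj : Set.InjOn g ↑D
  · rw [if_pos hinj]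
    rw [Finset.sum_eq_single_of_mem 1 (by simp [hd])]
    · have hfull : (D.powersetCard 1).filter
          (fun F => (∃ j, ∀ i ∈ F, g i = j) ∧ Set.InjOn g ↑(D \ F)) = D.powersetCard 1 := by
        apply Finset.filter_true_of_mem
        intro F hF
        rw [Finset.mem_powersetCard] at hF
        obtain ⟨i, rfl⟩ := Finset.card_eq_one.mp hF.2
        refine ⟨⟨g i, by simp⟩, hinj.mono ?_⟩
        intro x hx
        simp only [coe_sdiff, Set.mem_diff, mem_coe] at hx
        exact hx.1
      rw [hfull, Finset.card_powersetCard, Nat.choose_one_right]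
      have : (D.card : ℚ) ≠ 0 := by positivity
      field_simp
      simp
    · intro k hk hk1
      have hk2 : 2 ≤ k := by
        rw [Finset.mem_Icc] at hk; omega
      have hemp : (D.powersetCard k).filter
          (fun F => (∃ j, ∀ i ∈ F, g i = j) ∧ Set.InjOn g ↑(D \ F)) = ∅ := by
        ext F
        simp only [Finset.mem_filter, Finset.mem_powersetCard, Finset.notMem_empty, iff_false]
        rintro ⟨⟨hFD, hFk⟩, ⟨j, hj⟩, -⟩
        obtain ⟨x, hx, y, hy, hxy⟩ := Finset.one_lt_card.mp (by omega : 1 < F.card)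
        exact hxy (hinj (hFD hx) (hFD hy) ((hj x hx).trans (hj y hy).symm))
      rw [hemp]
      simp
  · rw [if_neg hinj]
    rw [Set.injOn_iff_injective] at hinj
    have : ∃ a ∈ D, ∃ b ∈ D, a ≠ b ∧ g a = g b := by
      by_contra hcon
      push_neg at hcon
      apply hinj
      intro x y hxy
      apply Subtype.ext
      by_contra hne
      exact hcon ↑x (Finset.mem_coe.mp x.2) ↑y (Finset.mem_coe.mp y.2) hne hxy
    obtain ⟨a, ha, b, hb, hab, hgab⟩ := this
    set G := D.filter (fun i => g i = g a) with hG
    have hGD : G ⊆ D := Finset.filter_subset _ _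
    have ham : a ∈ G := by simp [hG, ha]
    have hbm : b ∈ G := by simp [hG, hb, hgab.symm]
    have hm2 : 2 ≤ G.card := Finset.one_lt_card.mpr ⟨a, ham, b, hbm, hab⟩
    -- key: any valid F is contained in G
    have key : ∀ F, F ⊆ D → F.Nonempty → (∃ j, ∀ i ∈ F, g i = j) →
        Set.InjOn g ↑(D \ F) → F ⊆ G := by
      rintro F hFD ⟨i0, hi0⟩ ⟨j, hj⟩ hIF
      have hja : j = g a := by
        by_contra hne
        have ha' : a ∈ D \ F := by
          simp only [Finset.mem_sdiff]
          exact ⟨ha, fun h => hne ((hj a h).symm)⟩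
        have hb' : b ∈ D \ F := by
          simp only [Finset.mem_sdiff]
          refine ⟨hb, fun h => hne ?_⟩
          rw [← hj b h, hgab]
        exact hab (hIF (by simpa using ha') (by simpa using hb') hgab)
      intro x hx
      simp only [hG, Finset.mem_filter]
      exact ⟨hFD hx, (hj x hx).trans hja⟩
    by_cases hI : Set.InjOn g ↑(D \ G)
    · -- counts: choose m k for k ∈ {m-1, m}
      have hcard : ∀ k, 1 ≤ k → (((D.powersetCard k).filter
          (fun F => (∃ j, ∀ i ∈ F, g i = j) ∧ Set.InjOn g ↑(D \ F))).card)
          = if G.card ≤ k + 1 then G.card.choose k else 0 := by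
        intro k hk
        by_cases hkm : G.card ≤ k + 1
        · rw [if_pos hkm]
          have heq : (D.powersetCard k).filter
              (fun F => (∃ j, ∀ i ∈ F, g i = j) ∧ Set.InjOn g ↑(D \ F))
              = G.powersetCard k := by
            ext F
            simp only [Finset.mem_filter, Finset.mem_powersetCard]
            constructor
            · rintro ⟨⟨hFD, hFk⟩, hj, hIF⟩
              exact ⟨key F hFD (Finset.card_pos.mp (by omega)) hj hIF, hFk⟩
            · rintro ⟨hFG, hFk⟩
              refine ⟨⟨hFG.trans hGD, hFk⟩,
                ⟨g a, fun i hi => (Finset.mem_filter.mp (hFG hi)).2⟩, ?_⟩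
              have hcd : (G \ F).card ≤ 1 := by
                rw [Finset.card_sdiff_of_subset hFG, hFk]; omega
              intro x hx y hy hxy
              simp only [coe_sdiff, Set.mem_diff, mem_coe] at hx hy
              by_cases hxG : x ∈ G <;> by_cases hyG : y ∈ G
              · by_contra hne
                have : 1 < (G \ F).card := Finset.one_lt_card.mpr
                  ⟨x, Finset.mem_sdiff.mpr ⟨hxG, hx.2⟩, y, Finset.mem_sdiff.mpr ⟨hyG, hy.2⟩, hne⟩
                omega
              · exfalso
                apply hyG
                simp only [hG, Finset.mem_filter]
                refine ⟨hy.1, ?_⟩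
                rw [← hxy]
                exact (Finset.mem_filter.mp hxG).2
              · exfalso
                apply hxG
                simp only [hG, Finset.mem_filter]
                refine ⟨hx.1, ?_⟩
                rw [hxy]
                exact (Finset.mem_filter.mp hyG).2
              · exact hI (by simp only [coe_sdiff, Set.mem_diff, mem_coe]; exact ⟨hx.1, hxG⟩)
                  (by simp only [coe_sdiff, Set.mem_diff, mem_coe]; exact ⟨hy.1, hyG⟩) hxy
          rw [heq, Finset.card_powersetCard]
        · rw [if_neg hkm, Finset.card_eq_zero]
          ext F
          simp only [Finset.mem_filter, Finset.mem_powersetCard, Finset.notMem_empty, iff_false]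
          rintro ⟨⟨hFD, hFk⟩, hj, hIF⟩
          have hFG : F ⊆ G := key F hFD (Finset.card_pos.mp (by omega)) hj hIF
          -- card (G \ F) ≥ 2 then two elements both mapping to g a
          have : 1 < (G \ F).card := by
            rw [Finset.card_sdiff_of_subset hFG, hFk]
            omega
          obtain ⟨x, hx, y, hy, hxy⟩ := Finset.one_lt_card.mp this
          have hx' := Finset.mem_sdiff.mp hx
          have hy' := Finset.mem_sdiff.mp hy
          apply hxy
          apply hIF
          · simp only [coe_sdiff, Set.mem_diff, mem_coe]
            exact ⟨hGD hx'.1, hx'.2⟩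
          · simp only [coe_sdiff, Set.mem_diff, mem_coe]
            exact ⟨hGD hy'.1, hy'.2⟩
          · rw [(Finset.mem_filter.mp hx'.1).2, (Finset.mem_filter.mp hy'.1).2]
      obtain ⟨m', hm'⟩ : ∃ m', G.card = m' + 2 := ⟨G.card - 2, by omega⟩
      have hsub : ({m'+1, m'+2} : Finset ℕ) ⊆ Finset.Icc 1 D.card := by
        have : G.card ≤ D.card := Finset.card_le_card hGD
        intro k hk
        simp only [Finset.mem_insert, Finset.mem_singleton] at hk
        rw [Finset.mem_Icc]
        omega
      rw [← Finset.sum_subset hsub]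
      · rw [Finset.sum_pair (by omega : m' + 1 ≠ m' + 2)]
        rw [hcard _ (by omega), hcard _ (by omega), hm']
        rw [if_pos (by omega), if_pos (by omega)]
        rw [Nat.choose_succ_self_right, Nat.choose_self]
        have h1 : (m' + 1) - 1 = m' := by omega
        have h2 : (m' + 2) - 1 = m' + 1 := by omega
        rw [h1, h2]
        have hfac : ((m'+2).factorial : ℚ) = (m'+2) * (m'+1).factorial := by
          rw [Nat.factorial_succ]; push_cast; ring
        rw [hfac, pow_succ]
        have : (D.card : ℚ) ≠ 0 := by positivity
        field_simp
        push_cast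
        ring
      · intro k hk hknot
        simp only [Finset.mem_insert, Finset.mem_singleton, not_or] at hknot
        rw [Finset.mem_Icc] at hk
        rw [hcard _ (by omega)]
        rcases lt_or_ge (k+1) G.card with h | h
        · rw [if_neg (by omega)]
          simp
        · rw [if_pos h]
          have : G.card < k := by omega
          rw [Nat.choose_eq_zero_of_lt this]
          simp
    · -- all filters empty
      apply Finset.sum_eq_zero
      intro k hk
      rw [Finset.mem_Icc] at hk
      have hemp : (D.powersetCard k).filter
          (fun F => (∃ j, ∀ i ∈ F, g i = j) ∧ Set.InjOn g ↑(D \ F)) = ∅ := by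
        ext F
        simp only [Finset.mem_filter, Finset.mem_powersetCard, Finset.notMem_empty, iff_false]
        rintro ⟨⟨hFD, hFk⟩, hj, hIF⟩
        have hFG : F ⊆ G := key F hFD (Finset.card_pos.mp (by omega)) hj hIF
        apply hI
        apply hIF.mono
        intro x hx
        simp only [coe_sdiff, Set.mem_diff, mem_coe] at hx ⊢
        exact ⟨hx.1, fun h => hx.2 (hFG h)⟩
      rw [hemp]
      simp

lemma injSum_eq (n : ℕ) [NeZero n] (E : Finset (Fin (n+1))) :
    (∑ γ : (↥E ↪ Fin n), ∏ i : ↥E, (X ((i : Fin (n + 1)), γ i) :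
        MvPolynomial (Fin (n + 1) × Fin n) ℚ)) =
      ∑ f ∈ Finset.univ.filter (fun f : Fin (n+1) → Fin n =>
          Set.InjOn f ↑E ∧ ∀ i ∉ E, f i = 0),
        ∏ i ∈ E, X (i, f i) := by
  refine Finset.sum_bij'
    (fun (γ : ↥E ↪ Fin n) (_ : γ ∈ Finset.univ) =>
      fun i : Fin (n+1) => if h : i ∈ E then γ ⟨i, h⟩ else 0)
    (fun f hf => ⟨fun i => f ↑i, fun x y hxy => Subtype.ext
      (((Finset.mem_filter.mp hf).2.1) (Finset.mem_coe.mpr x.2) (Finset.mem_coe.mpr y.2) hxy)⟩)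
    ?_ ?_ ?_ ?_ ?_
  · intro γ _
    rw [Finset.mem_filter]
    refine ⟨Finset.mem_univ _, ?_, ?_⟩
    · intro x hx y hy hxy
      have hx' := Finset.mem_coe.mp hx
      have hy' := Finset.mem_coe.mp hy
      simp only [dif_pos hx', dif_pos hy'] at hxy
      have := γ.injective hxy
      exact congrArg Subtype.val this
    · intro i hi
      exact dif_neg hi
  · intro f hf
    exact Finset.mem_univ _
  · intro γ _
    ext x
    simp
  · intro f hf
    rw [Finset.mem_filter] at hf
    ext i
    by_cases h : i ∈ E
    · simp [h]; rfl
    · simp [h, hf.2.2 i h]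
  · intro γ _
    rw [← Finset.prod_coe_sort E (fun i => X (i, if h : i ∈ E then γ ⟨i, h⟩ else 0))]
    apply Finset.prod_congr rfl
    intro x _
    congr 1
    simp [x.2]

lemma cross_eq (n : ℕ) [NeZero n] (D F : Finset (Fin (n+1))) (hF : F.Nonempty) (hFD : F ⊆ D) :
    ((∑ j : Fin n, ∏ i ∈ F, (X (i, j) : MvPolynomial (Fin (n + 1) × Fin n) ℚ)) *
      ∑ f ∈ Finset.univ.filter (fun f : Fin (n+1) → Fin n =>
          Set.InjOn f ↑(D \ F) ∧ ∀ i ∉ D \ F, f i = 0),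
        ∏ i ∈ D \ F, X (i, f i)) =
      ∑ g ∈ Finset.univ.filter (fun g : Fin (n+1) → Fin n =>
          (∀ i ∉ D, g i = 0) ∧ (∃ j, ∀ i ∈ F, g i = j) ∧ Set.InjOn g ↑(D \ F)),
        ∏ i ∈ D, X (i, g i) := by
  rw [Finset.sum_mul_sum, ← Finset.sum_product']
  refine Finset.sum_bij'
    (fun (p : Fin n × (Fin (n+1) → Fin n)) (_ : p ∈ _) =>
      fun i : Fin (n+1) => if i ∈ F then p.1 else p.2 i)
    (fun g hg => (g (F.min' hF), fun i => if i ∈ F then 0 else g i))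
    ?_ ?_ ?_ ?_ ?_
  · rintro ⟨j, f⟩ hp
    rw [Finset.mem_product, Finset.mem_filter] at hp
    obtain ⟨-, -, hfI, hf0⟩ := hp
    rw [Finset.mem_filter]
    refine ⟨Finset.mem_univ _, ?_, ⟨j, fun i hi => if_pos hi⟩, ?_⟩
    · intro i hi
      have hiF : i ∉ F := fun h => hi (hFD h)
      simp only [if_neg hiF]
      exact hf0 i (fun h => hi (Finset.mem_sdiff.mp h).1)
    · intro x hx y hy hxy
      have hx' := Finset.mem_sdiff.mp (Finset.mem_coe.mp hx)
      have hy' := Finset.mem_sdiff.mp (Finset.mem_coe.mp hy)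
      simp only [if_neg hx'.2, if_neg hy'.2] at hxy
      exact hfI hx hy hxy
  · intro g hg
    rw [Finset.mem_filter] at hg
    obtain ⟨-, hg0, ⟨j, hj⟩, hgI⟩ := hg
    rw [Finset.mem_product]
    refine ⟨Finset.mem_univ _, ?_⟩
    rw [Finset.mem_filter]
    refine ⟨Finset.mem_univ _, ?_, ?_⟩
    · intro x hx y hy hxy
      have hx' := Finset.mem_sdiff.mp (Finset.mem_coe.mp hx)
      have hy' := Finset.mem_sdiff.mp (Finset.mem_coe.mp hy)
      simp only [if_neg hx'.2, if_neg hy'.2] at hxy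
      exact hgI hx hy hxy
    · intro i hi
      by_cases h : i ∈ F
      · simp [h]
      · simp only [if_neg h]
        show g i = 0
        apply hg0
        intro hiD
        exact hi (Finset.mem_sdiff.mpr ⟨hiD, h⟩)
  · rintro ⟨j, f⟩ hp
    rw [Finset.mem_product, Finset.mem_filter] at hp
    obtain ⟨-, -, hfI, hf0⟩ := hp
    have hmin : F.min' hF ∈ F := F.min'_mem hF
    refine Prod.ext ?_ ?_
    · simp [hmin]
    · funext i
      by_cases h : i ∈ F
      · simp only [if_pos h]
        show (0 : Fin n) = f i
        exact (hf0 i (fun hm => (Finset.mem_sdiff.mp hm).2 h)).symm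
      · simp [h]
  · intro g hg
    rw [Finset.mem_filter] at hg
    obtain ⟨-, hg0, ⟨j, hj⟩, hgI⟩ := hg
    funext i
    by_cases h : i ∈ F
    · simp only [if_pos h]
      show g (F.min' hF) = g i
      rw [hj _ (F.min'_mem hF), hj _ h]
    · simp [h]
  · rintro ⟨j, f⟩ hp
    show ((∏ i ∈ F, (X (i, j) : MvPolynomial (Fin (n + 1) × Fin n) ℚ)) *
        ∏ i ∈ D \ F, X (i, f i)) = ∏ i ∈ D, X (i, if i ∈ F then j else f i)
    have hunion : F ∪ (D \ F) = D := Finset.union_sdiff_of_subset hFD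
    conv_rhs => rw [← hunion, Finset.prod_union Finset.disjoint_sdiff]
    congr 1
    · apply Finset.prod_congr rfl
      intro i hi
      simp [hi]
    · apply Finset.prod_congr rfl
      intro i hi
      have := (Finset.mem_sdiff.mp hi).2
      simp [this]

/-- The injection-sum polynomial `B_D = Σ_{γ : D ↪ [n]} ∏_{i ∈ D} x_{i,γ(i)}`. -/
noncomputable def injSum (n : ℕ) (D : Finset (Fin (n + 1))) :
    MvPolynomial (Fin (n + 1) × Fin n) ℚ :=
  ∑ γ : (↥D ↪ Fin n), ∏ i : ↥D, X ((i : Fin (n + 1)), γ i)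

lemma injSum_eq' (n : ℕ) [NeZero n] (E : Finset (Fin (n+1))) :
    injSum n E =
      ∑ f ∈ Finset.univ.filter (fun f : Fin (n+1) → Fin n =>
          Set.InjOn f ↑E ∧ ∀ i ∉ E, f i = 0),
        ∏ i ∈ E, X (i, f i) := by
  unfold injSum
  exact injSum_eq n E

/-- Recursive inclusion–exclusion identity for the injection-sum
polynomials: for nonempty `D ⊆ [n+1]`,
`B_D = Σ_{k=1}^{|D|} (−1)^{k−1}·(k!/|D|)·Σ_{D_k ⊆ D, |D_k| = k}
       (Σ_j X_{D_k→j})·B_{D∖D_k}`. -/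
theorem stmt10 (n : ℕ) (D : Finset (Fin (n + 1))) (hD : D.Nonempty) :
    injSum n D =
      ∑ k ∈ Finset.Icc 1 D.card,
        C ((-1 : ℚ) ^ (k - 1) * (k.factorial : ℚ) / (D.card : ℚ)) *
          (∑ Dk ∈ D.powersetCard k,
            (∑ j : Fin n, ∏ i ∈ Dk, X (i, j)) * injSum n (D \ Dk)) := by
  obtain _ | m := n
  · haveI : Nonempty ↥D := hD.to_subtype
    haveI : IsEmpty (↥D ↪ Fin 0) := ⟨fun f => (f (Classical.arbitrary _)).elim0⟩
    simp [injSum]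
  · haveI : NeZero (m + 1) := ⟨m.succ_ne_zero⟩
    symm
    calc
      ∑ k ∈ Finset.Icc 1 D.card,
          C ((-1 : ℚ) ^ (k - 1) * (k.factorial : ℚ) / (D.card : ℚ)) *
            (∑ Dk ∈ D.powersetCard k,
              (∑ j : Fin (m+1), ∏ i ∈ Dk, X (i, j)) * injSum (m+1) (D \ Dk))
        = ∑ k ∈ Finset.Icc 1 D.card,
            C ((-1 : ℚ) ^ (k - 1) * (k.factorial : ℚ) / (D.card : ℚ)) *
            ∑ Dk ∈ D.powersetCard k,
              ∑ g ∈ Finset.univ.filter (fun g : Fin (m+2) → Fin (m+1) =>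
                  (∀ i ∉ D, g i = 0) ∧ (∃ j, ∀ i ∈ Dk, g i = j) ∧ Set.InjOn g ↑(D \ Dk)),
                ∏ i ∈ D, X (i, g i) := by
          refine Finset.sum_congr rfl fun k hk => ?_
          congr 1
          refine Finset.sum_congr rfl fun F hF => ?_
          rw [Finset.mem_Icc] at hk
          rw [Finset.mem_powersetCard] at hF
          have hFne : F.Nonempty := Finset.card_pos.mp (by omega)
          rw [injSum_eq']
          exact cross_eq (m+1) D F hFne hF.1
      _ = ∑ k ∈ Finset.Icc 1 D.card,
            C ((-1 : ℚ) ^ (k - 1) * (k.factorial : ℚ) / (D.card : ℚ)) *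
            ∑ Dk ∈ D.powersetCard k,
              ∑ g ∈ Finset.univ.filter (fun g : Fin (m+2) → Fin (m+1) => ∀ i ∉ D, g i = 0),
                if (∃ j, ∀ i ∈ Dk, g i = j) ∧ Set.InjOn g ↑(D \ Dk)
                  then ∏ i ∈ D, X (i, g i) else 0 := by
          refine Finset.sum_congr rfl fun k _ => ?_
          congr 1
          refine Finset.sum_congr rfl fun F _ => ?_
          rw [← Finset.sum_filter, Finset.filter_filter]
      _ = ∑ g ∈ Finset.univ.filter (fun g : Fin (m+2) → Fin (m+1) => ∀ i ∉ D, g i = 0),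
            ∑ k ∈ Finset.Icc 1 D.card,
              C ((-1 : ℚ) ^ (k - 1) * (k.factorial : ℚ) / (D.card : ℚ)) *
              ∑ Dk ∈ D.powersetCard k,
                if (∃ j, ∀ i ∈ Dk, g i = j) ∧ Set.InjOn g ↑(D \ Dk)
                  then ∏ i ∈ D, X (i, g i) else 0 := by
          simp_rw [Finset.mul_sum]
          rw [show (∑ k ∈ Finset.Icc 1 D.card, ∑ Dk ∈ D.powersetCard k,
              ∑ g ∈ Finset.univ.filter (fun g : Fin (m+2) → Fin (m+1) => ∀ i ∉ D, g i = 0),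
                C ((-1 : ℚ) ^ (k - 1) * (k.factorial : ℚ) / (D.card : ℚ)) *
                if (∃ j, ∀ i ∈ Dk, g i = j) ∧ Set.InjOn g ↑(D \ Dk)
                  then ∏ i ∈ D, X (i, g i) else 0)
              = ∑ k ∈ Finset.Icc 1 D.card,
                ∑ g ∈ Finset.univ.filter (fun g : Fin (m+2) → Fin (m+1) => ∀ i ∉ D, g i = 0),
                ∑ Dk ∈ D.powersetCard k,
                C ((-1 : ℚ) ^ (k - 1) * (k.factorial : ℚ) / (D.card : ℚ)) *
                if (∃ j, ∀ i ∈ Dk, g i = j) ∧ Set.InjOn g ↑(D \ Dk)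
                  then ∏ i ∈ D, X (i, g i) else 0
            from Finset.sum_congr rfl fun k _ => Finset.sum_comm]
          rw [Finset.sum_comm]
      _ = ∑ g ∈ Finset.univ.filter (fun g : Fin (m+2) → Fin (m+1) => ∀ i ∉ D, g i = 0),
            C (∑ k ∈ Finset.Icc 1 D.card,
                ((-1 : ℚ) ^ (k - 1) * (k.factorial : ℚ) / (D.card : ℚ)) *
                (((D.powersetCard k).filter
                  (fun F => (∃ j, ∀ i ∈ F, g i = j) ∧ Set.InjOn g ↑(D \ F))).card : ℚ)) *
              ∏ i ∈ D, X (i, g i) := by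
          refine Finset.sum_congr rfl fun g _ => ?_
          rw [map_sum, Finset.sum_mul]
          refine Finset.sum_congr rfl fun k _ => ?_
          rw [← Finset.sum_filter, Finset.sum_const, map_mul, mul_assoc]
          congr 1
          rw [nsmul_eq_mul, map_natCast]
      _ = ∑ g ∈ Finset.univ.filter (fun g : Fin (m+2) → Fin (m+1) => ∀ i ∉ D, g i = 0),
            if Set.InjOn g ↑D then ∏ i ∈ D, X (i, g i) else 0 := by
          refine Finset.sum_congr rfl fun g _ => ?_
          rw [count_lemma (m+1) g D hD]
          split_ifs <;> simp
      _ = injSum (m+1) D := by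
          rw [injSum_eq', ← Finset.sum_filter, Finset.filter_filter]
          apply Finset.sum_congr _ fun _ _ => rfl
          ext g
          simp only [Finset.mem_filter, Finset.mem_univ, true_and]
          exact and_comm
end

section
/- CFI equation system satisfiability criterion: let G = (V,E) be 3-regular connected, u ∈ V, a ∈ F₂. The system over F₂ with variables x_i^e (e ∈ E, i ∈ F₂), consisting of the equations x_i^e + x_j^f + x_k^g = i+j+k + a·[v=u] (for every v with E(v)={e,f,g} and all i,j,k ∈ F₂), x_0^e + x_1^e = 1 for every e ∈ E, and x² = x for every variable, is satisfiable if and only if a = 0. -/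
/-- CFI satisfiability criterion: for a 3-regular connected graph
`G`, distinguished vertex `u` and twist `a ∈ F₂`, the CFI system (vertex
equations `x_i^e + x_j^f + x_k^g = i + j + k + a·[v = u]` for the three distinct
incident edges of each vertex, edge equations `x_0^e + x_1^e = 1` and Boolean
axioms) is satisfiable if and only if `a = 0`. -/
theorem stmt16 {V : Type*} [Fintype V] [DecidableEq V]
    (G : SimpleGraph V) [DecidableRel G.Adj]
    (hreg : G.IsRegularOfDegree 3) (hconn : G.Connected) (u : V) (a : ZMod 2) :
    (∃ x : Sym2 V → ZMod 2 → ZMod 2,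
      (∀ v : V, ∀ e f g : Sym2 V,
        e ∈ G.incidenceFinset v → f ∈ G.incidenceFinset v →
        g ∈ G.incidenceFinset v → e ≠ f → e ≠ g → f ≠ g →
        ∀ i j k : ZMod 2,
          x e i + x f j + x g k = i + j + k + a * (if v = u then 1 else 0)) ∧
      (∀ e ∈ G.edgeFinset, x e 0 + x e 1 = 1) ∧
      (∀ (e : Sym2 V) (i : ZMod 2), (x e i) ^ 2 = x e i)) ↔
    a = 0 := by
  constructor
  · rintro ⟨x, hv, -, -⟩
    have key : ∀ v : V, ∑ e ∈ G.incidenceFinset v, x e 0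
        = a * (if v = u then 1 else 0) := by
      intro v
      have hc : (G.incidenceFinset v).card = 3 := by
        rw [G.card_incidenceFinset_eq_degree]; exact hreg v
      obtain ⟨e, f, g, hef, heg, hfg, hset⟩ := Finset.card_eq_three.mp hc
      have he : e ∈ G.incidenceFinset v := by rw [hset]; simp
      have hf : f ∈ G.incidenceFinset v := by rw [hset]; simp
      have hg : g ∈ G.incidenceFinset v := by rw [hset]; simp
      rw [hset, Finset.sum_insert (by simp [hef, heg]),
        Finset.sum_insert (by simp [hfg]), Finset.sum_singleton]
      have := hv v e f g he hf hg hef heg hfg 0 0 0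
      simpa [add_assoc] using this
    have hsum : ∑ v : V, ∑ e ∈ G.incidenceFinset v, x e 0 = a := by
      rw [Finset.sum_congr rfl (fun v _ => key v)]
      simp
    have hsum2 : ∑ v : V, ∑ e ∈ G.incidenceFinset v, x e 0 = 0 := by
      have : ∀ v : V, ∑ e ∈ G.incidenceFinset v, x e 0
          = ∑ e ∈ G.edgeFinset, if v ∈ e then x e 0 else 0 := by
        intro v
        rw [G.incidenceFinset_eq_filter, Finset.sum_filter]
      rw [Finset.sum_congr rfl (fun v _ => this v), Finset.sum_comm]
      refine Finset.sum_eq_zero (fun e he => ?_)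
      have hne : ¬ e.IsDiag := SimpleGraph.not_isDiag_of_mem_edgeSet G
        (SimpleGraph.mem_edgeFinset.mp he)
      induction e with
      | h p q =>
        have hpq : p ≠ q := by simpa using hne
        have : (Finset.univ.filter (· ∈ s(p, q))).card = 2 := by
          have : Finset.univ.filter (· ∈ s(p, q)) = {p, q} := by
            ext v; simp [Sym2.mem_iff]
          rw [this, Finset.card_insert_of_notMem (by simpa using hpq),
            Finset.card_singleton]
        rw [← Finset.sum_filter, Finset.sum_const, this]
        rw [two_nsmul, CharTwo.add_self_eq_zero]
    rw [hsum2] at hsum; exact hsum.symm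
  · rintro rfl
    refine ⟨fun _ i => i, fun v e f g _ _ _ _ _ _ i j k => by ring,
      fun e _ => by ring, fun e i => ?_⟩
    show i ^ 2 = i
    fin_cases i <;> rfl
end
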